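/- Let $\{\eta_t\}_{t\ge 0}$ be positive step sizes with $\eta_t \to 0$ and $\sum_t \eta_t = \infty$. Then any real sequence $\{d_t\}$ satisfying $d_{t+1} = d_t - \eta_t \,\mathrm{sign}(d_t)$ converges to $0$ for any initial value $d_0 \in \mathbb{R}$. -/

import Mathlib

open Filter Matrix

noncomputable def l2 {n : ℕ} (v : Fin n → ℝ) : ℝ := Real.sqrt (∑ i, v i ^ 2)
noncomputable def l1 {n : ℕ} (v : Fin n → ℝ) : ℝ := ∑ i, |v i|
noncomputable def linf {n : ℕ} (v : Fin n → ℝ) : ℝ := ⨆ i, |v i|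
noncomputable def maxNorm {m n : ℕ} (W : Matrix (Fin m) (Fin n) ℝ) : ℝ := ⨆ i, ⨆ j, |W i j|
noncomputable def spec {m n : ℕ} (W : Matrix (Fin m) (Fin n) ℝ) : ℝ :=
  sSup {c | ∃ v : Fin n → ℝ, l2 v = 1 ∧ c = l2 (W.mulVec v)}
noncomputable def l0 {n : ℕ} (v : Fin n → ℝ) : ℕ := (Finset.univ.filter fun j => v j ≠ 0).card

theorem stmt0 (η : ℕ → ℝ) (hpos : ∀ t, 0 < η t)
    (hto0 : Tendsto η atTop (nhds 0))
    (hdiv : Tendsto (fun N => ∑ t ∈ Finset.range N, η t) atTop atTop)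
    (d : ℕ → ℝ) (hrec : ∀ t, d (t + 1) = d t - η t * Real.sign (d t)) :
    Tendsto d atTop (nhds 0) := by
  have step : ∀ t, |d (t + 1)| ≤ max (|d t| - η t) (η t) := by
    intro t
    have h := hrec t
    have hη := hpos t
    rcases lt_trichotomy (d t) 0 with hlt | heq | hgt
    · rw [Real.sign_of_neg hlt] at h
      have habs : |d t| = -(d t) := abs_of_neg hlt
      rcases le_or_gt (η t) (-(d t)) with hc | hc
      · have : |d (t + 1)| = |d t| - η t := by
          rw [h, habs, abs_of_nonpos (by linarith)]; ring
        rw [this]; exact le_max_left _ _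
      · have : |d (t + 1)| ≤ η t := by
          rw [h, abs_le]; constructor <;> nlinarith
        exact this.trans (le_max_right _ _)
    · rw [heq] at h; simp at h
      rw [h, heq]; simp
      right; linarith
    · rw [Real.sign_of_pos hgt] at h
      have habs : |d t| = d t := abs_of_pos hgt
      rcases le_or_gt (η t) (d t) with hc | hc
      · have : |d (t + 1)| = |d t| - η t := by
          rw [h, habs, abs_of_nonneg (by linarith)]; ring
        rw [this]; exact le_max_left _ _
      · have : |d (t + 1)| ≤ η t := by
          rw [h, abs_le]; constructor <;> nlinarith
        exact this.trans (le_max_right _ _)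
  have key : ∀ ε : ℝ, 0 < ε → ∃ N, ∀ t ≥ N, |d t| ≤ ε := by
    intro ε hε
    obtain ⟨T, hT⟩ := Metric.tendsto_atTop.mp hto0 ε hε
    have hη : ∀ t, T ≤ t → η t ≤ ε := by
      intro t ht
      have := hT t ht
      rw [Real.dist_eq, sub_zero, abs_of_pos (hpos t)] at this
      linarith
    have hexists : ∃ t, T ≤ t ∧ |d t| ≤ ε := by
      by_contra hcon
      push_neg at hcon
      have hdec : ∀ n, |d (T + n)| ≤ |d T| - ∑ k ∈ Finset.range n, η (T + k) := by
        intro n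
        induction n with
        | zero => simp
        | succ n ih =>
          have h1 : ε < |d (T + n)| := hcon _ (Nat.le_add_right T n)
          have h2 := step (T + n)
          have hηn : η (T + n) ≤ ε := hη _ (Nat.le_add_right T n)
          have h3 : ε < |d (T + (n + 1))| := hcon _ (Nat.le_add_right _ _)
          have heq : T + (n + 1) = (T + n) + 1 := by ring
          rw [heq] at h3 ⊢
          have h4 : |d ((T + n) + 1)| ≤ |d (T + n)| - η (T + n) := by
            rcases le_max_iff.mp h2 with h | h
            · exact h
            · linarith
          rw [Finset.sum_range_succ]
          linarith
      have hshift : Tendsto (fun n => ∑ t ∈ Finset.range (T + n), η t) atTop atTop :=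
        by simpa [Function.comp_def, Nat.add_comm] using hdiv.comp (tendsto_add_atTop_nat T)
      obtain ⟨n, hn⟩ := (tendsto_atTop.mp hshift (∑ t ∈ Finset.range T, η t + |d T| + 1)).exists
      have hsum : ∑ t ∈ Finset.range (T + n), η t
          = ∑ t ∈ Finset.range T, η t + ∑ k ∈ Finset.range n, η (T + k) :=
        Finset.sum_range_add η T n
      have := hdec n
      have h5 := (hcon (T + n) (Nat.le_add_right T n)).le
      have h0 : (0:ℝ) ≤ |d (T + n)| := abs_nonneg _
      rw [hsum] at hn
      linarith
    obtain ⟨t₀, ht₀T, ht₀⟩ := hexists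
    refine ⟨t₀, fun t ht => ?_⟩
    induction t, ht using Nat.le_induction with
    | base => exact ht₀
    | succ t ht ih =>
      have h2 := step t
      have hηt : η t ≤ ε := hη t (ht₀T.trans ht)
      have : |d t| - η t ≤ ε := by linarith [(hpos t)]
      exact (h2.trans (max_le this hηt))
  rw [Metric.tendsto_atTop]
  intro ε hε
  obtain ⟨N, hN⟩ := key (ε / 2) (by linarith)
  refine ⟨N, fun t ht => ?_⟩
  rw [Real.dist_eq, sub_zero]
  have := hN t ht
  linarith
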